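/- With the connection of the previous setting (paracontact metric (κ,μ)-Lie algebra with κ≠−1), define φ by φξ=0, φE1=E1, φE2=−E2, η dual to ξ, and h by hξ=0, hE1=εE2, hE2=ε(κ+1)E1. Then the curvature satisfies R(X,Y)ξ = κ(η(Y)X − η(X)Y) + μ(η(Y)hX − η(X)hY) for all X, Y in the Lie algebra. -/
import Mathlib


noncomputable section

def ξ : Fin 3 → ℝ := ![1, 0, 0]
def E1 : Fin 3 → ℝ := ![0, 1, 0]
def E2 : Fin 3 → ℝ := ![0, 0, 1]

/-- Bracket [E1,E2] = 2ξ, [ξ,E1] = (1−μ/2)E1 + εE2, [ξ,E2] = −ε(κ+1)E1 − (1−μ/2)E2. -/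
def br (κ μ ε : ℝ) (x y : Fin 3 → ℝ) : Fin 3 → ℝ :=
  (x 1 * y 2 - x 2 * y 1) • ![2, 0, 0] +
  (x 0 * y 1 - x 1 * y 0) • ![0, 1 - μ / 2, ε] +
  (x 0 * y 2 - x 2 * y 0) • ![0, -(ε * (κ + 1)), -(1 - μ / 2)]

/-- η dual to ξ. -/
def η (x : Fin 3 → ℝ) : ℝ := x 0

/-- h: hξ = 0, hE1 = εE2, hE2 = ε(κ+1)E1. -/
def h (κ ε : ℝ) (x : Fin 3 → ℝ) : Fin 3 → ℝ := ![0, ε * (κ + 1) * x 2, ε * x 1]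

lemma decomp (x : Fin 3 → ℝ) : x = x 0 • ξ + x 1 • E1 + x 2 • E2 := by
  funext i
  fin_cases i <;> simp [ξ, E1, E2]

set_option maxHeartbeats 1000000 in
/-- With the Levi-Civita connection of the paracontact metric (κ,μ)-Lie algebra, the
curvature satisfies R(X,Y)ξ = κ(η(Y)X − η(X)Y) + μ(η(Y)hX − η(X)hY). -/
theorem paracontact_km_curvature (κ μ ε : ℝ) (hε : ε = 1 ∨ ε = -1)
    (nabla : (Fin 3 → ℝ) →ₗ[ℝ] (Fin 3 → ℝ) →ₗ[ℝ] (Fin 3 → ℝ))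
    (h1 : nabla ξ ξ = 0)
    (h2 : nabla ξ E1 = -(μ / 2) • E1)
    (h3 : nabla ξ E2 = (μ / 2) • E2)
    (h4 : nabla E1 ξ = -E1 - ε • E2)
    (h5 : nabla E1 E1 = ε • ξ)
    (h6 : nabla E1 E2 = ξ)
    (h7 : nabla E2 ξ = (ε * (κ + 1)) • E1 + E2)
    (h8 : nabla E2 E1 = -ξ)
    (h9 : nabla E2 E2 = -(ε * (κ + 1)) • ξ)
    (R : (Fin 3 → ℝ) → (Fin 3 → ℝ) → (Fin 3 → ℝ) → (Fin 3 → ℝ))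
    (hR : ∀ X Y Z, R X Y Z =
      nabla X (nabla Y Z) - nabla Y (nabla X Z) - nabla (br κ μ ε X Y) Z) :
    ∀ X Y, R X Y ξ =
      κ • (η Y • X - η X • Y) + μ • (η Y • h κ ε X - η X • h κ ε Y) := by
  rcases hε with rfl | rfl <;>
  · intro X Y
    rw [hR]
    rw [decomp (br _ _ _ X Y), decomp X, decomp Y]
    simp only [map_add, map_sub, map_neg, map_smul, LinearMap.add_apply, LinearMap.smul_apply,
      h1, h2, h3, h4, h5, h6, h7, h8, h9, br, η, h]
    funext i
    fin_cases i <;>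
      simp [ξ, E1, E2] <;> ring
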